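/- Let q : [0,1] → ℝ be continuously differentiable, nonincreasing, with q(0) = 1, and suppose q(t) ≥ e^(-t) for all t ∈ [0,1]. Let b ≥ 0 and α(t) = 1 - e^(t-1). Then ∫₀¹ q(t)·(1 - α(t))·b dt - ∫₀¹ q'(t)·α(t)·b dt ≥ (1 - 1/e)·b. -/

import Mathlib

theorem single_item_welfare_bound (q q' : ℝ → ℝ)
    (hderiv : ∀ t ∈ Set.Icc (0:ℝ) 1, HasDerivAt q (q' t) t)
    (hcont : ContinuousOn q' (Set.Icc (0:ℝ) 1))
    (hmono : ∀ s ∈ Set.Icc (0:ℝ) 1, ∀ t ∈ Set.Icc (0:ℝ) 1, s ≤ t → q t ≤ q s)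
    (hq0 : q 0 = 1)
    (hq : ∀ t ∈ Set.Icc (0:ℝ) 1, q t ≥ Real.exp (-t))
    (b : ℝ) (hb : 0 ≤ b)
    (α : ℝ → ℝ) (hα : α = fun t => 1 - Real.exp (t - 1)) :
    (∫ t in (0:ℝ)..1, q t * (1 - α t) * b) - (∫ t in (0:ℝ)..1, q' t * α t * b)
      ≥ (1 - 1 / Real.exp 1) * b := by
  subst hα
  have huIcc : Set.uIcc (0:ℝ) 1 = Set.Icc 0 1 := Set.uIcc_of_le (by norm_num)
  have hqc : ContinuousOn q (Set.Icc (0:ℝ) 1) := fun t ht =>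
    (hderiv t ht).continuousAt.continuousWithinAt
  -- derivative of α
  have hαd : ∀ t ∈ Set.uIcc (0:ℝ) 1,
      HasDerivAt (fun t => 1 - Real.exp (t - 1)) (-Real.exp (t - 1)) t := by
    intro t _
    have h1 : HasDerivAt (fun t : ℝ => t - 1) 1 t := (hasDerivAt_id t).sub_const 1
    have h2 : HasDerivAt (fun t : ℝ => Real.exp (t - 1)) (Real.exp (t-1) * 1) t :=
      (Real.hasDerivAt_exp _).comp t h1
    simpa using h2.const_sub (1:ℝ)
  have hqd : ∀ t ∈ Set.uIcc (0:ℝ) 1, HasDerivAt q (q' t) t := by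
    rw [huIcc]; exact hderiv
  have hq'i : IntervalIntegrable q' MeasureTheory.volume 0 1 := by
    apply ContinuousOn.intervalIntegrable; rwa [huIcc]
  have hαi : IntervalIntegrable (fun t => -Real.exp (t - 1)) MeasureTheory.volume 0 1 := by
    apply Continuous.intervalIntegrable; continuity
  have ibp := intervalIntegral.integral_mul_deriv_eq_deriv_mul hqd hαd hq'i hαi
  -- ibp : ∫ q t * (-exp(t-1)) = q 1 * α 1 - q 0 * α 0 - ∫ q' t * α t
  have hq1 : q 1 * (1 - Real.exp ((1:ℝ) - 1)) = 0 := by norm_num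
  -- simplify first integral: q t * (1 - (1 - exp(t-1))) = q t * exp(t-1)
  have e1 : (∫ t in (0:ℝ)..1, q t * (1 - (fun t => 1 - Real.exp (t - 1)) t) * b)
      = (∫ t in (0:ℝ)..1, q t * Real.exp (t - 1)) * b := by
    rw [← intervalIntegral.integral_mul_const]
    congr 1; ext t; ring_nf
  have e2 : (∫ t in (0:ℝ)..1, q' t * (fun t => 1 - Real.exp (t - 1)) t * b)
      = (∫ t in (0:ℝ)..1, q' t * (1 - Real.exp (t - 1))) * b := by
    rw [← intervalIntegral.integral_mul_const]
  rw [e1, e2, ← sub_mul]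
  have key : (∫ t in (0:ℝ)..1, q t * Real.exp (t - 1))
      - (∫ t in (0:ℝ)..1, q' t * (1 - Real.exp (t - 1))) = 1 - 1 / Real.exp 1 := by
    have hneg : (∫ t in (0:ℝ)..1, q t * (-Real.exp (t - 1)))
        = -(∫ t in (0:ℝ)..1, q t * Real.exp (t - 1)) := by
      rw [← intervalIntegral.integral_neg]; congr 1; ext t; ring
    rw [hneg] at ibp
    norm_num at ibp
    have : q 0 * (1 - Real.exp ((0:ℝ) - 1)) = 1 - 1 / Real.exp 1 := by
      rw [hq0, one_mul]
      congr 1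
      rw [show (0:ℝ) - 1 = -1 by norm_num, Real.exp_neg, one_div]
    linarith [ibp, hq1, this]
  rw [key]
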